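/- Let k ∈ ℂ, let K ⊂ ℝ³ be compact, and let f : ℝ³ → ℂ³ be a bounded measurable function vanishing outside K. Define the vector potential u : ℝ³ \ K → ℂ³ componentwise by u(x) = ∫_K exp(i k ‖x−y‖)/(4π ‖x−y‖) · f(y) dy (Lebesgue integral). Then for every x ∉ K, ∇×(∇×u)(x) = k² u(x) + ∇(∇·u)(x). -/

import Mathlib

noncomputable section

open MeasureTheory

/-- The Euclidean norm on `ℝ³` (realized as `Fin 3 → ℝ`). -/
def enorm3 (x : Fin 3 → ℝ) : ℝ := Real.sqrt (x 0 ^ 2 + x 1 ^ 2 + x 2 ^ 2)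

/-- The Helmholtz Green's function `G_k(x,y) = exp(i k ‖x−y‖)/(4π ‖x−y‖)`. -/
def G (k : ℂ) (x y : Fin 3 → ℝ) : ℂ :=
  Complex.exp (Complex.I * k * (enorm3 (x - y) : ℂ)) /
    (4 * (Real.pi : ℂ) * (enorm3 (x - y) : ℂ))

/-- Partial derivative in the `i`-th coordinate direction. -/
def pd (i : Fin 3) (f : (Fin 3 → ℝ) → ℂ) (x : Fin 3 → ℝ) : ℂ :=
  fderiv ℝ f x (Pi.single i 1)

/-- The curl `∇×F = (∂₂F₃−∂₃F₂, ∂₃F₁−∂₁F₃, ∂₁F₂−∂₂F₁)` of a vector field. -/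
def curl (F : (Fin 3 → ℝ) → Fin 3 → ℂ) (x : Fin 3 → ℝ) : Fin 3 → ℂ :=
  ![pd 1 (fun z => F z 2) x - pd 2 (fun z => F z 1) x,
    pd 2 (fun z => F z 0) x - pd 0 (fun z => F z 2) x,
    pd 0 (fun z => F z 1) x - pd 1 (fun z => F z 0) x]

/-- The divergence `∇·F = ∂₁F₁ + ∂₂F₂ + ∂₃F₃` of a vector field. -/
def divg (F : (Fin 3 → ℝ) → Fin 3 → ℂ) (x : Fin 3 → ℝ) : ℂ :=
  pd 0 (fun z => F z 0) x + pd 1 (fun z => F z 1) x + pd 2 (fun z => F z 2) x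

open Complex Topology Filter

def Fc (k z : ℂ) : ℂ := Complex.exp (I*k*z) / (4*(Real.pi:ℂ)*z)
def Ac (k z : ℂ) : ℂ := Complex.exp (I*k*z) * (I*k*z - 1) / (4*(Real.pi:ℂ)*z^3)
def Bc (k z : ℂ) : ℂ := Complex.exp (I*k*z) * (-(k^2)*z^2 - 3*(I*k*z) + 3) / (4*(Real.pi:ℂ)*z^4)

lemma pi_ne : (Real.pi : ℂ) ≠ 0 := Complex.ofReal_ne_zero.mpr Real.pi_ne_zero

lemma hasDerivAt_exp_lin (k z : ℂ) : HasDerivAt (fun z => Complex.exp (I*k*z)) (I*k*Complex.exp (I*k*z)) z := by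
  have h := (Complex.hasDerivAt_exp (I*k*z)).comp z (((hasDerivAt_id z).const_mul (I*k)))
  have : (fun z => Complex.exp (I*k*z)) = Complex.exp ∘ (fun z => I*k*z) := rfl
  rw [this]
  convert (preTransparency := .default) h using 1
  simp [mul_comm]

lemma hasDerivAt_Fc (k : ℂ) {z : ℂ} (hz : z ≠ 0) : HasDerivAt (Fc k) (Ac k z * z) z := by
  have hπ := pi_ne
  have hd : (4*(Real.pi:ℂ)*z) ≠ 0 := by simp [hπ, hz]
  have h := (hasDerivAt_exp_lin k z).div ((hasDerivAt_id z).const_mul (4*(Real.pi:ℂ))) hd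
  convert (preTransparency := .default) h using 1
  unfold Ac
  simp only [id]
  field_simp

lemma hasDerivAt_Ac (k : ℂ) {z : ℂ} (hz : z ≠ 0) : HasDerivAt (Ac k) (Bc k z) z := by
  have hπ := pi_ne
  have hd : (4*(Real.pi:ℂ)*z^3) ≠ 0 := by simp [hπ, hz]
  have hnum : HasDerivAt (fun z => Complex.exp (I*k*z) * (I*k*z - 1))
      (I*k*Complex.exp (I*k*z) * (I*k*z-1) + Complex.exp (I*k*z) * (I*k)) z := by
    have := (hasDerivAt_exp_lin k z).mul (((hasDerivAt_id z).const_mul (I*k)).sub_const 1)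
    convert (preTransparency := .default) this using 1
    simp only [id]
    ring
  have hden : HasDerivAt (fun z : ℂ => 4*(Real.pi:ℂ)*z^3) (4*(Real.pi:ℂ)*(3*z^2)) z := by
    simpa [mul_assoc] using ((hasDerivAt_pow 3 z).const_mul (4*(Real.pi:ℂ)))
  have h := hnum.div hden hd
  convert (preTransparency := .default) h using 1
  unfold Bc
  field_simp
  ring_nf
  simp only [Complex.I_sq]
  ring

lemma trace_eq (k : ℂ) {z : ℂ} (hz : z ≠ 0) : Bc k z * z + 3 * Ac k z = -(k^2) * Fc k z := by
  have hπ := pi_ne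
  unfold Bc Ac Fc
  field_simp
  ring

lemma enorm3_pos {w : Fin 3 → ℝ} (hw : w ≠ 0) : 0 < enorm3 w := by
  apply Real.sqrt_pos.mpr
  by_contra h
  push_neg at h
  have h0 : w 0 = 0 := by nlinarith [sq_nonneg (w 0), sq_nonneg (w 1), sq_nonneg (w 2)]
  have h1 : w 1 = 0 := by nlinarith [sq_nonneg (w 0), sq_nonneg (w 1), sq_nonneg (w 2)]
  have h2 : w 2 = 0 := by nlinarith [sq_nonneg (w 0), sq_nonneg (w 1), sq_nonneg (w 2)]
  exact hw (funext fun a => by fin_cases a <;> assumption)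

lemma enorm3_sq (w : Fin 3 → ℝ) : enorm3 w ^ 2 = w 0 ^ 2 + w 1 ^ 2 + w 2 ^ 2 :=
  Real.sq_sqrt (by positivity)

lemma norm_le_enorm3 (v : Fin 3 → ℝ) : ‖v‖ ≤ enorm3 v := by
  apply pi_norm_le_iff_of_nonneg (Real.sqrt_nonneg _) |>.mpr
  intro i
  rw [Real.norm_eq_abs, ← Real.sqrt_sq_eq_abs]
  apply Real.sqrt_le_sqrt
  fin_cases i <;> simp <;> nlinarith [sq_nonneg (v 0), sq_nonneg (v 1), sq_nonneg (v 2)]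

lemma enorm3_le (v : Fin 3 → ℝ) : enorm3 v ≤ 3 * ‖v‖ := by
  have h : ∀ i, |v i| ≤ ‖v‖ := fun i => by
    simpa [Real.norm_eq_abs] using norm_le_pi_norm v i
  have := h 0; have := h 1; have := h 2
  rw [show (3:ℝ) * ‖v‖ = Real.sqrt ((3*‖v‖)^2) from (Real.sqrt_sq (by positivity)).symm]
  apply Real.sqrt_le_sqrt
  nlinarith [abs_nonneg (v 0), abs_nonneg (v 1), abs_nonneg (v 2), _root_.sq_abs (v 0), _root_.sq_abs (v 1), _root_.sq_abs (v 2), norm_nonneg v]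

lemma continuous_enorm3 : Continuous enorm3 := by
  apply Real.continuous_sqrt.comp
  continuity

def dotR (w : Fin 3 → ℝ) : (Fin 3 → ℝ) →L[ℝ] ℝ :=
  w 0 • ContinuousLinearMap.proj 0 + w 1 • ContinuousLinearMap.proj 1 +
    w 2 • ContinuousLinearMap.proj 2

lemma dotR_apply (w v : Fin 3 → ℝ) : dotR w v = w 0 * v 0 + w 1 * v 1 + w 2 * v 2 := by
  simp [dotR, smul_eq_mul]

lemma hasFDerivAt_enorm3 {w : Fin 3 → ℝ} (hw : w ≠ 0) :
    HasFDerivAt enorm3 (((enorm3 w)⁻¹ • dotR w : (Fin 3 → ℝ) →L[ℝ] ℝ)) w := by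
  have hQ : HasFDerivAt (fun w : Fin 3 → ℝ => w 0 ^ 2 + w 1 ^ 2 + w 2 ^ 2)
      (((2 * w 0) • ContinuousLinearMap.proj 0 + (2 * w 1) • ContinuousLinearMap.proj 1 +
        (2 * w 2) • ContinuousLinearMap.proj 2 : (Fin 3 → ℝ) →L[ℝ] ℝ)) w := by
    have h : ∀ a : Fin 3, HasFDerivAt (fun w : Fin 3 → ℝ => w a ^ 2)
        (((2 * w a) • ContinuousLinearMap.proj a : (Fin 3 → ℝ) →L[ℝ] ℝ)) w := by
      intro a
      have := ((ContinuousLinearMap.proj a (R := ℝ) (φ := fun _ : Fin 3 => ℝ)).hasFDerivAt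
        (x := w)).mul ((ContinuousLinearMap.proj a).hasFDerivAt (x := w))
      convert (preTransparency := .default) this using 1
      · funext v; simp [sq]
      · ext v; simp [two_mul, mul_comm]; ring
    exact ((h 0).add (h 1)).add (h 2)
  have hQ0 : w 0 ^ 2 + w 1 ^ 2 + w 2 ^ 2 ≠ 0 := by
    have := enorm3_pos hw
    have h2 := enorm3_sq w
    nlinarith [this]
  have hs := (Real.hasDerivAt_sqrt hQ0).comp_hasFDerivAt w hQ
  convert (preTransparency := .default) hs using 1
  ext v
  have hN := (enorm3_pos hw).ne'
  simp only [enorm3] at *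
  simp [dotR_apply, smul_eq_mul, ContinuousLinearMap.proj]
  field_simp

def pC (a : Fin 3) : (Fin 3 → ℝ) →L[ℝ] ℂ :=
  Complex.ofRealCLM.comp (ContinuousLinearMap.proj a)

lemma pC_apply (a : Fin 3) (v : Fin 3 → ℝ) : pC a v = (v a : ℂ) := rfl

def dotC (w : Fin 3 → ℝ) : (Fin 3 → ℝ) →L[ℝ] ℂ :=
  ((w 0 : ℂ)) • pC 0 + ((w 1 : ℂ)) • pC 1 + ((w 2 : ℂ)) • pC 2

lemma dotC_apply (w v : Fin 3 → ℝ) :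
    dotC w v = ((w 0 : ℂ)) * v 0 + ((w 1 : ℂ)) * v 1 + ((w 2 : ℂ)) * v 2 := by
  simp [dotC, pC_apply, smul_eq_mul]

lemma hasFDerivAt_enormC {w : Fin 3 → ℝ} (hw : w ≠ 0) :
    HasFDerivAt (fun w => ((enorm3 w : ℝ) : ℂ))
      ((((enorm3 w : ℝ) : ℂ))⁻¹ • dotC w : (Fin 3 → ℝ) →L[ℝ] ℂ) w := by
  have h := (Complex.ofRealCLM.hasFDerivAt (x := enorm3 w)).comp w (hasFDerivAt_enorm3 hw)
  convert (preTransparency := .default) h using 1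
  ext v
  have hN := (enorm3_pos hw).ne'
  simp [dotC_apply, dotR_apply, Complex.ofRealCLM_apply, smul_eq_mul]
  field_simp

def DGm (k : ℂ) (w : Fin 3 → ℝ) : (Fin 3 → ℝ) →L[ℝ] ℂ :=
  (Ac k (enorm3 w)) • dotC w

lemma DGm_apply_single (k : ℂ) (w : Fin 3 → ℝ) (a : Fin 3) :
    DGm k w (Pi.single a 1) = Ac k (enorm3 w) * (w a : ℂ) := by
  fin_cases a <;>
    simp [DGm, dotC_apply, smul_eq_mul, Pi.single_apply] <;> ring

lemma hasFDerivAt_G0 (k : ℂ) {w : Fin 3 → ℝ} (hw : w ≠ 0) :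
    HasFDerivAt (fun w => Fc k (enorm3 w)) (DGm k w) w := by
  have hz : ((enorm3 w : ℝ) : ℂ) ≠ 0 := Complex.ofReal_ne_zero.mpr (enorm3_pos hw).ne'
  have h := (hasDerivAt_Fc k hz).comp_hasFDerivAt w (hasFDerivAt_enormC hw)
  convert (preTransparency := .default) h using 1
  ext v
  simp [DGm, smul_eq_mul]
  field_simp

def Hc (k : ℂ) (a b : Fin 3) (w : Fin 3 → ℝ) : ℂ :=
  Bc k (enorm3 w) * (w a : ℂ) * (w b : ℂ) / ((enorm3 w : ℝ) : ℂ) +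
    (if a = b then Ac k (enorm3 w) else 0)

def D2m (k : ℂ) (a : Fin 3) (w : Fin 3 → ℝ) : (Fin 3 → ℝ) →L[ℝ] ℂ :=
  Hc k a 0 w • pC 0 + Hc k a 1 w • pC 1 + Hc k a 2 w • pC 2

lemma D2m_apply_single (k : ℂ) (a b : Fin 3) (w : Fin 3 → ℝ) :
    D2m k a w (Pi.single b 1) = Hc k a b w := by
  fin_cases b <;> simp [D2m, pC_apply, smul_eq_mul, Pi.single_apply]

lemma Hc_symm (k : ℂ) (a b : Fin 3) (w : Fin 3 → ℝ) : Hc k a b w = Hc k b a w := by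
  unfold Hc
  have : (if a = b then Ac k (enorm3 w) else 0) = (if b = a then Ac k (enorm3 w) else 0) := by
    simp [eq_comm]
  rw [this]
  ring

lemma hasFDerivAt_G1 (k : ℂ) (a : Fin 3) {w : Fin 3 → ℝ} (hw : w ≠ 0) :
    HasFDerivAt (fun w : Fin 3 → ℝ => Ac k (enorm3 w) * ((w a : ℝ) : ℂ)) (D2m k a w) w := by
  have hz : ((enorm3 w : ℝ) : ℂ) ≠ 0 := Complex.ofReal_ne_zero.mpr (enorm3_pos hw).ne'
  have hA : HasFDerivAt (fun w : Fin 3 → ℝ => Ac k (enorm3 w))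
      ((Bc k (enorm3 w)) • ((((enorm3 w : ℝ) : ℂ))⁻¹ • dotC w) : (Fin 3 → ℝ) →L[ℝ] ℂ) w :=
    ((hasDerivAt_Ac k hz).comp_hasFDerivAt w (hasFDerivAt_enormC hw) :)
  have ha : HasFDerivAt (fun w : Fin 3 → ℝ => ((w a : ℝ) : ℂ)) (pC a) w :=
    (pC a).hasFDerivAt
  have h := hA.mul ha
  convert (preTransparency := .default) h using 1
  ext v
  fin_cases a <;>
    (simp [D2m, Hc, pC_apply, dotC_apply, smul_eq_mul]; field_simp; push_cast; ring)

lemma trace_Hc (k : ℂ) {w : Fin 3 → ℝ} (hw : w ≠ 0) :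
    Hc k 0 0 w + Hc k 1 1 w + Hc k 2 2 w = -(k^2) * Fc k (enorm3 w) := by
  have hz : ((enorm3 w : ℝ) : ℂ) ≠ 0 := Complex.ofReal_ne_zero.mpr (enorm3_pos hw).ne'
  have hsq : ((w 0 : ℂ))*(w 0) + (w 1 : ℂ)*(w 1) + (w 2 : ℂ)*(w 2)
      = ((enorm3 w : ℝ) : ℂ) * ((enorm3 w : ℝ) : ℂ) := by
    have hR : w 0 * w 0 + w 1 * w 1 + w 2 * w 2 = enorm3 w * enorm3 w := by
      nlinarith [enorm3_sq w]
    exact_mod_cast congrArg Complex.ofReal hR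
  have ht := trace_eq k hz
  unfold Hc
  simp only [if_pos rfl, eq_self_iff_true, if_true]
  field_simp
  linear_combination Bc k ((enorm3 w : ℝ) : ℂ) * hsq + ((enorm3 w : ℝ) : ℂ) * ht

lemma continuous_dotC : Continuous dotC := by
  unfold dotC
  apply Continuous.add
  apply Continuous.add
  · exact (Complex.continuous_ofReal.comp (continuous_apply 0)).smul continuous_const
  · exact (Complex.continuous_ofReal.comp (continuous_apply 1)).smul continuous_const
  · exact (Complex.continuous_ofReal.comp (continuous_apply 2)).smul continuous_const

lemma continuousAt_enormC {w : Fin 3 → ℝ} :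
    ContinuousAt (fun w : Fin 3 → ℝ => ((enorm3 w : ℝ) : ℂ)) w :=
  (Complex.continuous_ofReal.comp continuous_enorm3).continuousAt

lemma continuousAt_Fc (k : ℂ) {z : ℂ} (hz : z ≠ 0) : ContinuousAt (Fc k) z := by
  apply ContinuousAt.div
  · exact (Complex.continuous_exp.comp (continuous_const.mul continuous_id)).continuousAt
  · fun_prop
  · simp [pi_ne, hz, Real.pi_ne_zero]

lemma continuousAt_Ac (k : ℂ) {z : ℂ} (hz : z ≠ 0) : ContinuousAt (Ac k) z := by
  apply ContinuousAt.div
  · apply ContinuousAt.mul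
    · exact (Complex.continuous_exp.comp (continuous_const.mul continuous_id)).continuousAt
    · fun_prop
  · fun_prop
  · simp [pi_ne, hz, Real.pi_ne_zero]

lemma continuousAt_Bc (k : ℂ) {z : ℂ} (hz : z ≠ 0) : ContinuousAt (Bc k) z := by
  apply ContinuousAt.div
  · apply ContinuousAt.mul
    · exact (Complex.continuous_exp.comp (continuous_const.mul continuous_id)).continuousAt
    · fun_prop
  · fun_prop
  · simp [pi_ne, hz, Real.pi_ne_zero]

lemma nezC {w : Fin 3 → ℝ} (hw : w ≠ 0) : ((enorm3 w : ℝ) : ℂ) ≠ 0 :=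
  Complex.ofReal_ne_zero.mpr (enorm3_pos hw).ne'

lemma continuousAt_Fc_enorm (k : ℂ) {w : Fin 3 → ℝ} (hw : w ≠ 0) :
    ContinuousAt (fun w : Fin 3 → ℝ => Fc k (enorm3 w)) w :=
  ContinuousAt.comp (x := w) (g := Fc k) (continuousAt_Fc k (nezC hw)) continuousAt_enormC

lemma continuousAt_Ac_enorm (k : ℂ) {w : Fin 3 → ℝ} (hw : w ≠ 0) :
    ContinuousAt (fun w : Fin 3 → ℝ => Ac k (enorm3 w)) w :=
  ContinuousAt.comp (x := w) (g := Ac k) (continuousAt_Ac k (nezC hw)) continuousAt_enormC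

lemma continuousAt_Bc_enorm (k : ℂ) {w : Fin 3 → ℝ} (hw : w ≠ 0) :
    ContinuousAt (fun w : Fin 3 → ℝ => Bc k (enorm3 w)) w :=
  ContinuousAt.comp (x := w) (g := Bc k) (continuousAt_Bc k (nezC hw)) continuousAt_enormC

lemma continuousAt_DGm (k : ℂ) {w : Fin 3 → ℝ} (hw : w ≠ 0) :
    ContinuousAt (DGm k) w := by
  exact (continuousAt_Ac_enorm k hw).smul continuous_dotC.continuousAt

lemma continuousAt_coeff (k : ℂ) (a : Fin 3) {w : Fin 3 → ℝ} (hw : w ≠ 0) :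
    ContinuousAt (fun w : Fin 3 → ℝ => Ac k (enorm3 w) * ((w a : ℝ) : ℂ)) w :=
  (continuousAt_Ac_enorm k hw).mul
    (Complex.continuous_ofReal.comp (continuous_apply a)).continuousAt

lemma continuousAt_Hc (k : ℂ) (a b : Fin 3) {w : Fin 3 → ℝ} (hw : w ≠ 0) :
    ContinuousAt (fun w => Hc k a b w) w := by
  unfold Hc
  apply ContinuousAt.add
  · apply ContinuousAt.div
    · exact ((continuousAt_Bc_enorm k hw).mul
        (Complex.continuous_ofReal.comp (continuous_apply a)).continuousAt).mul
        (Complex.continuous_ofReal.comp (continuous_apply b)).continuousAt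
    · exact continuousAt_enormC
    · exact nezC hw
  · split
    · exact continuousAt_Ac_enorm k hw
    · exact continuousAt_const

lemma continuousAt_D2m (k : ℂ) (a : Fin 3) {w : Fin 3 → ℝ} (hw : w ≠ 0) :
    ContinuousAt (D2m k a) w := by
  unfold D2m
  exact (((continuousAt_Hc k a 0 hw).smul continuousAt_const).add
    ((continuousAt_Hc k a 1 hw).smul continuousAt_const)).add
    ((continuousAt_Hc k a 2 hw).smul continuousAt_const)

lemma curl_curl0 (U : (Fin 3 → ℝ) → Fin 3 → ℂ) (x : Fin 3 → ℝ) :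
    curl (curl U) x 0 =
      pd 1 (fun z => pd 0 (fun w => U w 1) z - pd 1 (fun w => U w 0) z) x -
      pd 2 (fun z => pd 2 (fun w => U w 0) z - pd 0 (fun w => U w 2) z) x := by
  simp [curl]

lemma curl_curl1 (U : (Fin 3 → ℝ) → Fin 3 → ℂ) (x : Fin 3 → ℝ) :
    curl (curl U) x 1 =
      pd 2 (fun z => pd 1 (fun w => U w 2) z - pd 2 (fun w => U w 1) z) x -
      pd 0 (fun z => pd 0 (fun w => U w 1) z - pd 1 (fun w => U w 0) z) x := by
  simp [curl]

lemma curl_curl2 (U : (Fin 3 → ℝ) → Fin 3 → ℂ) (x : Fin 3 → ℝ) :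
    curl (curl U) x 2 =
      pd 0 (fun z => pd 2 (fun w => U w 0) z - pd 0 (fun w => U w 2) z) x -
      pd 1 (fun z => pd 1 (fun w => U w 2) z - pd 2 (fun w => U w 1) z) x := by
  simp [curl]

lemma pd_divg (U : (Fin 3 → ℝ) → Fin 3 → ℂ) (x : Fin 3 → ℝ) (i : Fin 3) :
    pd i (divg U) x =
      pd i (fun z => pd 0 (fun w => U w 0) z + pd 1 (fun w => U w 1) z +
        pd 2 (fun w => U w 2) z) x := rfl

lemma G_eq (k : ℂ) (z y : Fin 3 → ℝ) : G k z y = Fc k (enorm3 (z - y)) := rfl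

set_option maxHeartbeats 2000000 in
/-- For a bounded measurable current `f` supported in a compact set `K`, the vector
potential `u(x) = ∫_K G_k(x,y) f(y) dy` satisfies
`∇×(∇×u)(x) = k² u(x) + ∇(∇·u)(x)` for every `x ∉ K`. -/
theorem statement3 (k : ℂ) (K : Set (Fin 3 → ℝ)) (hK : IsCompact K)
    (f : (Fin 3 → ℝ) → Fin 3 → ℂ) (hmeas : Measurable f)
    (hbdd : ∃ C : ℝ, ∀ y : Fin 3 → ℝ, ∀ i : Fin 3, ‖f y i‖ ≤ C)
    (hvanish : ∀ y ∉ K, f y = 0) :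
    ∀ x ∉ K, ∀ i : Fin 3,
      curl (curl (fun z i' => ∫ y in K, G k z y * f y i')) x i =
        k ^ 2 * (∫ y in K, G k x y * f y i) +
          pd i (divg (fun z i' => ∫ y in K, G k z y * f y i')) x := by
  classical
  obtain ⟨C, hC⟩ := hbdd
  have hC0 : 0 ≤ C := (norm_nonneg (f 0 0)).trans (hC 0 0)
  rcases K.eq_empty_or_nonempty with rfl | hKne
  · intro x hx i
    have hz : (divg fun z (i' : Fin 3) => (0:ℂ)) = fun _ => 0 :=
      funext fun z => by simp [divg, pd]
    simp only [Measure.restrict_empty, integral_zero_measure]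
    rw [hz]
    fin_cases i <;> simp [curl, pd]
  intro x hx i
  have hKm : MeasurableSet K := hK.measurableSet
  have hμK : (volume : Measure (Fin 3 → ℝ)) K < ⊤ := hK.measure_lt_top
  set μ := (volume : Measure (Fin 3 → ℝ)).restrict K with hμdef
  -- geometry
  have hd : 0 < Metric.infDist x K := (hK.isClosed.notMem_iff_infDist_pos hKne).mp hx
  set d := Metric.infDist x K with hddef
  obtain ⟨RK, hRK⟩ := hK.isBounded.exists_norm_le
  set S : Set (Fin 3 → ℝ) :=
    {w | d/2 ≤ enorm3 w} ∩ Metric.closedBall 0 (d/2 + ‖x‖ + RK) with hSdef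
  have hScomp : IsCompact S :=
    IsCompact.inter_left (isCompact_closedBall 0 _)
      (isClosed_le continuous_const continuous_enorm3)
  have hSne0 : ∀ w ∈ S, w ≠ 0 := by
    rintro w ⟨hw1, _⟩ rfl
    simp only [Set.mem_setOf_eq] at hw1
    have h0 : enorm3 (0 : Fin 3 → ℝ) = 0 := by simp [enorm3]
    rw [h0] at hw1
    linarith
  have hmemS : ∀ z ∈ Metric.closedBall x (d/2), ∀ y ∈ K, z - y ∈ S := by
    intro z hz y hy
    have h1 : d ≤ dist x y := Metric.infDist_le_dist_of_mem hy
    have hzx : dist z x ≤ d/2 := Metric.mem_closedBall.mp hz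
    have h2 : d/2 ≤ dist z y := by
      have ht := dist_triangle x z y
      rw [dist_comm z x] at hzx
      linarith
    constructor
    · calc d/2 ≤ dist z y := h2
        _ = ‖z - y‖ := dist_eq_norm z y
        _ ≤ enorm3 (z - y) := norm_le_enorm3 _
    · rw [Metric.mem_closedBall, dist_zero_right]
      have : ‖z - y‖ ≤ ‖z - x‖ + ‖x - y‖ := by
        have := norm_add_le (z - x) (x - y)
        simpa using this
      have h3 : ‖x - y‖ ≤ ‖x‖ + ‖y‖ := norm_sub_le x y
      have h4 : ‖z - x‖ ≤ d/2 := by rw [← dist_eq_norm]; exact Metric.mem_closedBall.mp hz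
      have h5 := hRK y hy
      linarith
  have hsub_ne : ∀ z ∈ Metric.closedBall x (d/2), ∀ y ∈ K, z - y ≠ 0 :=
    fun z hz y hy => hSne0 _ (hmemS z hz y hy)
  -- bounds
  obtain ⟨M0, hM0⟩ := hScomp.exists_bound_of_continuousOn
    (f := fun w => Fc k (enorm3 w))
    (fun w hw => (continuousAt_Fc_enorm k (hSne0 w hw)).continuousWithinAt)
  obtain ⟨M1, hM1⟩ := hScomp.exists_bound_of_continuousOn (f := DGm k)
    (fun w hw => (continuousAt_DGm k (hSne0 w hw)).continuousWithinAt)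
  have hM2' : ∀ a : Fin 3, ∃ M, ∀ w ∈ S, ‖D2m k a w‖ ≤ M := fun a =>
    hScomp.exists_bound_of_continuousOn
      (fun w hw => (continuousAt_D2m k a (hSne0 w hw)).continuousWithinAt)
  choose M2 hM2 using hM2'
  have hM3' : ∀ a : Fin 3, ∃ M, ∀ w ∈ S, ‖Ac k (enorm3 w) * ((w a : ℝ) : ℂ)‖ ≤ M := fun a =>
    hScomp.exists_bound_of_continuousOn
      (fun w hw => (continuousAt_coeff k a (hSne0 w hw)).continuousWithinAt)
  choose M3 hM3 using hM3'
  -- measurability helpers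
  have hfm : ∀ j : Fin 3, AEStronglyMeasurable (fun y => f y j) μ :=
    fun j => ((measurable_pi_apply j).comp hmeas).aestronglyMeasurable
  have hAESM : ∀ {E : Type} [NormedAddCommGroup E] (φ : (Fin 3 → ℝ) → E),
      (∀ w : Fin 3 → ℝ, w ≠ 0 → ContinuousAt φ w) →
      ∀ z ∈ Metric.closedBall x (d/2), AEStronglyMeasurable (fun y => φ (z - y)) μ := by
    intro E _ φ hφ z hz
    refine ContinuousOn.aestronglyMeasurable (fun y hy => ?_) hKm
    exact (ContinuousAt.comp (x := y) (hφ _ (hsub_ne z hz y hy))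
      ((continuous_const.sub continuous_id).continuousAt)).continuousWithinAt
  have hconst_int : ∀ c : ℝ, Integrable (fun _ : Fin 3 → ℝ => c) μ := fun c =>
    integrableOn_const hμK.ne
  -- first derivative under the integral
  have key1 : ∀ (j : Fin 3) (z₀ : Fin 3 → ℝ), z₀ ∈ Metric.ball x (d/4) →
      Integrable (fun y => f y j • DGm k (z₀ - y)) μ ∧
      HasFDerivAt (fun z => ∫ y in K, G k z y * f y j)
        (∫ y, f y j • DGm k (z₀ - y) ∂μ) z₀ := by
    intro j z₀ hz₀
    have hz₀b := Metric.mem_ball.mp hz₀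
    have hz₀' : ∀ z ∈ Metric.ball z₀ (d/8), z ∈ Metric.closedBall x (d/2) := by
      intro z hz
      rw [Metric.mem_closedBall]
      have h1 := Metric.mem_ball.mp hz
      calc dist z x ≤ dist z z₀ + dist z₀ x := dist_triangle _ _ _
        _ ≤ d/2 := by linarith
    have hz₀'' : z₀ ∈ Metric.closedBall x (d/2) := by
      rw [Metric.mem_closedBall]; linarith
    have hAESM_F' : AEStronglyMeasurable (fun y => f y j • DGm k (z₀ - y)) μ :=
      (hfm j).smul (hAESM (DGm k) (fun w hw => continuousAt_DGm k hw) z₀ hz₀'')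
    have hbound : ∀ᵐ y ∂μ, ∀ z ∈ Metric.ball z₀ (d/8),
        ‖f y j • DGm k (z - y)‖ ≤ C * M1 := by
      refine (ae_restrict_iff' hKm).mpr (Filter.Eventually.of_forall fun y hy => ?_)
      intro z hz
      refine le_trans (ContinuousLinearMap.opNorm_smul_le _ _)
        (mul_le_mul (hC y j) (hM1 _ (hmemS z (hz₀' z hz) y hy)) (norm_nonneg _) hC0)
    have hint : Integrable (fun y => G k z₀ y * f y j) μ := by
      refine Integrable.mono' (hconst_int (M0 * C)) ?_ ?_
      · exact (hAESM (fun w => Fc k (enorm3 w))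
          (fun w hw => continuousAt_Fc_enorm k hw) z₀ hz₀'').mul (hfm j)
      · refine (ae_restrict_iff' hKm).mpr (Filter.Eventually.of_forall fun y hy => ?_)
        rw [G_eq, norm_mul]
        exact mul_le_mul (hM0 _ (hmemS z₀ hz₀'' y hy)) (hC y j) (norm_nonneg _)
          ((norm_nonneg _).trans (hM0 _ (hmemS z₀ hz₀'' y hy)))
    have hdiff : ∀ᵐ y ∂μ, ∀ z ∈ Metric.ball z₀ (d/8),
        HasFDerivAt (fun z => G k z y * f y j) (f y j • DGm k (z - y)) z := by
      refine (ae_restrict_iff' hKm).mpr (Filter.Eventually.of_forall fun y hy => ?_)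
      intro z hz
      have hw : z - y ≠ 0 := hsub_ne z (hz₀' z hz) y hy
      have h0 := (hasFDerivAt_G0 k hw).comp z ((hasFDerivAt_id z).sub_const y)
      have h1 := h0.mul_const (f y j)
      simpa [Function.comp, ContinuousLinearMap.comp_id, G_eq] using h1
    have hmeasF : ∀ᶠ z in 𝓝 z₀, AEStronglyMeasurable (fun y => G k z y * f y j) μ := by
      refine Filter.eventually_of_mem (Metric.ball_mem_nhds z₀ (by linarith : (0:ℝ) < d/8)) fun z hz => ?_
      exact (hAESM (fun w => Fc k (enorm3 w))
        (fun w hw => continuousAt_Fc_enorm k hw) z (hz₀' z hz)).mul (hfm j)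
    refine ⟨Integrable.mono' (hconst_int (C * M1)) hAESM_F'
      (hbound.mono fun y hy => hy z₀ (Metric.mem_ball_self (by linarith : (0:ℝ) < d/8))), ?_⟩
    exact hasFDerivAt_integral_of_dominated_of_fderiv_le (μ := μ)
      (F := fun z y => G k z y * f y j) (F' := fun z y => f y j • DGm k (z - y))
      (bound := fun _ => C * M1) (Metric.ball_mem_nhds z₀ (by linarith : (0:ℝ) < d/8))
      hmeasF hint hAESM_F' hbound (hconst_int _) hdiff
  -- the first-derivative integral functions
  set v : Fin 3 → Fin 3 → (Fin 3 → ℝ) → ℂ :=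
    fun a j z => ∫ y, f y j * (Ac k (enorm3 (z - y)) * (((z - y) a : ℝ) : ℂ)) ∂μ with hvdef
  have hpdv : ∀ (a j : Fin 3) (z₀ : Fin 3 → ℝ), z₀ ∈ Metric.ball x (d/4) →
      pd a (fun z => ∫ y in K, G k z y * f y j) z₀ = v a j z₀ := by
    intro a j z₀ hz₀
    rw [pd, (key1 j z₀ hz₀).2.fderiv, ContinuousLinearMap.integral_apply (key1 j z₀ hz₀).1]
    refine integral_congr_ae (Filter.Eventually.of_forall fun y => ?_)
    simp [DGm_apply_single, smul_eq_mul]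
  -- second derivative under the integral
  have key2 : ∀ (a j : Fin 3),
      Integrable (fun y => f y j • D2m k a (x - y)) μ ∧
      HasFDerivAt (v a j) (∫ y, f y j • D2m k a (x - y) ∂μ) x := by
    intro a j
    have hx'' : x ∈ Metric.closedBall x (d/2) := Metric.mem_closedBall_self (by linarith : (0:ℝ) ≤ d/2)
    have hz' : ∀ z ∈ Metric.ball x (d/8), z ∈ Metric.closedBall x (d/2) := by
      intro z hz
      rw [Metric.mem_closedBall]
      have h1 := Metric.mem_ball.mp hz
      linarith
    have hAESM_F' : AEStronglyMeasurable (fun y => f y j • D2m k a (x - y)) μ :=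
      (hfm j).smul (hAESM (D2m k a) (fun w hw => continuousAt_D2m k a hw) x hx'')
    have hbound : ∀ᵐ y ∂μ, ∀ z ∈ Metric.ball x (d/8),
        ‖f y j • D2m k a (z - y)‖ ≤ C * M2 a := by
      refine (ae_restrict_iff' hKm).mpr (Filter.Eventually.of_forall fun y hy => ?_)
      intro z hz
      refine le_trans (ContinuousLinearMap.opNorm_smul_le _ _)
        (mul_le_mul (hC y j) (hM2 a _ (hmemS z (hz' z hz) y hy)) (norm_nonneg _) hC0)
    have hint : Integrable (fun y => f y j * (Ac k (enorm3 (x - y)) * (((x - y) a : ℝ) : ℂ))) μ := by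
      refine Integrable.mono' (hconst_int (C * M3 a)) ?_ ?_
      · exact (hfm j).mul (hAESM (fun w => Ac k (enorm3 w) * ((w a : ℝ) : ℂ))
          (fun w hw => continuousAt_coeff k a hw) x hx'')
      · refine (ae_restrict_iff' hKm).mpr (Filter.Eventually.of_forall fun y hy => ?_)
        rw [norm_mul]
        exact mul_le_mul (hC y j) (hM3 a _ (hmemS x hx'' y hy)) (norm_nonneg _) hC0
    have hdiff : ∀ᵐ y ∂μ, ∀ z ∈ Metric.ball x (d/8),
        HasFDerivAt (fun z => f y j * (Ac k (enorm3 (z - y)) * (((z - y) a : ℝ) : ℂ)))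
          (f y j • D2m k a (z - y)) z := by
      refine (ae_restrict_iff' hKm).mpr (Filter.Eventually.of_forall fun y hy => ?_)
      intro z hz
      have hw : z - y ≠ 0 := hsub_ne z (hz' z hz) y hy
      have h0 := (hasFDerivAt_G1 k a hw).comp z ((hasFDerivAt_id z).sub_const y)
      have h1 := h0.const_mul (f y j)
      simpa [Function.comp, ContinuousLinearMap.comp_id, mul_assoc] using h1
    have hmeasF : ∀ᶠ z in 𝓝 x, AEStronglyMeasurable
        (fun y => f y j * (Ac k (enorm3 (z - y)) * (((z - y) a : ℝ) : ℂ))) μ := by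
      refine Filter.eventually_of_mem (Metric.ball_mem_nhds x (by linarith : (0:ℝ) < d/8)) fun z hz => ?_
      exact (hfm j).mul (hAESM (fun w => Ac k (enorm3 w) * ((w a : ℝ) : ℂ))
        (fun w hw => continuousAt_coeff k a hw) z (hz' z hz))
    refine ⟨Integrable.mono' (hconst_int (C * M2 a)) hAESM_F'
      (hbound.mono fun y hy => hy x (Metric.mem_ball_self (by linarith : (0:ℝ) < d/8))), ?_⟩
    exact hasFDerivAt_integral_of_dominated_of_fderiv_le (μ := μ)
      (F := fun z y => f y j * (Ac k (enorm3 (z - y)) * (((z - y) a : ℝ) : ℂ)))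
      (F' := fun z y => f y j • D2m k a (z - y))
      (bound := fun _ => C * M2 a) (Metric.ball_mem_nhds x (by linarith : (0:ℝ) < d/8))
      hmeasF hint hAESM_F' hbound (hconst_int _) hdiff
  -- second partial derivatives
  set T : Fin 3 → Fin 3 → Fin 3 → ℂ :=
    fun a b j => ∫ y, f y j * Hc k a b (x - y) ∂μ with hTdef
  have hTint : ∀ a b j, Integrable (fun y => f y j * Hc k a b (x - y)) μ := by
    intro a b j
    have := (ContinuousLinearMap.apply ℝ ℂ (Pi.single b (1:ℝ))).integrable_comp (key2 a j).1
    refine this.congr (Filter.Eventually.of_forall fun y => ?_)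
    simp [D2m_apply_single, smul_eq_mul]
  have hvT : ∀ a b j, pd b (v a j) x = T a b j := by
    intro a b j
    rw [pd, (key2 a j).2.fderiv, ContinuousLinearMap.integral_apply (key2 a j).1]
    refine integral_congr_ae (Filter.Eventually.of_forall fun y => ?_)
    simp [D2m_apply_single, smul_eq_mul]
  have hveq : ∀ a j, (fun z => pd a (fun w => ∫ y in K, G k w y * f y j) z)
      =ᶠ[nhds x] v a j := by
    intro a j
    filter_upwards [Metric.ball_mem_nhds x (by linarith : (0:ℝ) < d/4)] with z hz
    exact hpdv a j z hz
  -- pd of differences and sums of first partials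
  have hsub : ∀ a j a' j' b,
      pd b (fun z => pd a (fun w => ∫ y in K, G k w y * f y j) z -
        pd a' (fun w => ∫ y in K, G k w y * f y j') z) x = T a b j - T a' b j' := by
    intro a j a' j' b
    have he : (fun z => pd a (fun w => ∫ y in K, G k w y * f y j) z -
        pd a' (fun w => ∫ y in K, G k w y * f y j') z)
        =ᶠ[nhds x] (fun z => v a j z - v a' j' z) := (hveq a j).sub (hveq a' j')
    rw [pd, he.fderiv_eq, ((key2 a j).2.fun_sub (key2 a' j').2).fderiv]
    rw [ContinuousLinearMap.sub_apply,
      ContinuousLinearMap.integral_apply (key2 a j).1,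
      ContinuousLinearMap.integral_apply (key2 a' j').1]
    rw [← hvT a b j, ← hvT a' b j', hvT a b j, hvT a' b j', hTdef]
    congr 1 <;>
      refine integral_congr_ae (Filter.Eventually.of_forall fun y => ?_) <;>
      simp [D2m_apply_single, smul_eq_mul]
  have hadd : ∀ b,
      pd b (fun z => pd 0 (fun w => ∫ y in K, G k w y * f y 0) z +
        pd 1 (fun w => ∫ y in K, G k w y * f y 1) z +
        pd 2 (fun w => ∫ y in K, G k w y * f y 2) z) x = T 0 b 0 + T 1 b 1 + T 2 b 2 := by
    intro b
    have he : (fun z => pd 0 (fun w => ∫ y in K, G k w y * f y 0) z +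
        pd 1 (fun w => ∫ y in K, G k w y * f y 1) z +
        pd 2 (fun w => ∫ y in K, G k w y * f y 2) z)
        =ᶠ[nhds x] (fun z => v 0 0 z + v 1 1 z + v 2 2 z) :=
      ((hveq 0 0).add (hveq 1 1)).add (hveq 2 2)
    rw [pd, he.fderiv_eq, (((key2 0 0).2.fun_add (key2 1 1).2).fun_add (key2 2 2).2).fderiv]
    rw [ContinuousLinearMap.add_apply, ContinuousLinearMap.add_apply,
      ContinuousLinearMap.integral_apply (key2 0 0).1,
      ContinuousLinearMap.integral_apply (key2 1 1).1,
      ContinuousLinearMap.integral_apply (key2 2 2).1]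
    congr 1
    · congr 1 <;>
        refine integral_congr_ae (Filter.Eventually.of_forall fun y => ?_) <;>
        simp [D2m_apply_single, smul_eq_mul]
    · refine integral_congr_ae (Filter.Eventually.of_forall fun y => ?_)
      simp [D2m_apply_single, smul_eq_mul]
  -- symmetry and trace
  have hTsymm : ∀ a b j, T a b j = T b a j := by
    intro a b j
    simp only [hTdef]
    refine integral_congr_ae (Filter.Eventually.of_forall fun y => ?_)
    dsimp only
    rw [Hc_symm]
  have htrace : ∀ j, T 0 0 j + T 1 1 j + T 2 2 j = -(k^2) * ∫ y in K, G k x y * f y j := by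
    intro j
    have h1 : (∫ y, (f y j * Hc k 0 0 (x - y) + f y j * Hc k 1 1 (x - y) +
        f y j * Hc k 2 2 (x - y)) ∂μ) = T 0 0 j + T 1 1 j + T 2 2 j := by
      have hi12 : Integrable (fun y => f y j * Hc k 0 0 (x - y) +
          f y j * Hc k 1 1 (x - y)) μ := (hTint 0 0 j).add (hTint 1 1 j)
      rw [integral_add hi12 (hTint 2 2 j), integral_add (hTint 0 0 j) (hTint 1 1 j)]
    rw [← h1]
    rw [show (∫ y in K, G k x y * f y j) = ∫ y, G k x y * f y j ∂μ from rfl,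
        ← smul_eq_mul (α := ℂ), ← integral_smul (-(k^2)) (fun y => G k x y * f y j)]
    refine integral_congr_ae ((ae_restrict_iff' hKm).mpr
      (Filter.Eventually.of_forall fun y hy => ?_))
    have hw : x - y ≠ 0 := hsub_ne x (Metric.mem_closedBall_self (by linarith : (0:ℝ) ≤ d/2)) y hy
    have ht := trace_Hc k hw
    dsimp only
    rw [G_eq, smul_eq_mul]
    calc f y j * Hc k 0 0 (x - y) + f y j * Hc k 1 1 (x - y) + f y j * Hc k 2 2 (x - y)
        = f y j * (Hc k 0 0 (x - y) + Hc k 1 1 (x - y) + Hc k 2 2 (x - y)) := by ring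
      _ = f y j * (-(k^2) * Fc k (enorm3 (x - y))) := by rw [ht]
      _ = -k^2 * (Fc k (enorm3 (x - y)) * f y j) := by ring
  -- finish
  fin_cases i <;> simp only [Fin.zero_eta, Fin.mk_one, Fin.isValue, Fin.reduceFinMk]
  · rw [curl_curl0, pd_divg]
    rw [hsub 0 1 1 0 1, hsub 2 0 0 2 2, hadd 0]
    rw [show T 0 1 1 = T 1 0 1 from hTsymm 0 1 1, show T 0 2 2 = T 2 0 2 from hTsymm 0 2 2]
    have h0 := htrace 0
    linear_combination -h0
  · rw [curl_curl1, pd_divg]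
    rw [hsub 1 2 2 1 2, hsub 0 1 1 0 0, hadd 1]
    rw [show T 1 2 2 = T 2 1 2 from hTsymm 1 2 2, show T 1 0 0 = T 0 1 0 from hTsymm 1 0 0]
    have h1 := htrace 1
    linear_combination -h1
  · rw [curl_curl2, pd_divg]
    rw [hsub 2 0 0 2 0, hsub 1 2 2 1 1, hadd 2]
    rw [show T 2 0 0 = T 0 2 0 from hTsymm 2 0 0, show T 2 1 1 = T 1 2 1 from hTsymm 2 1 1]
    have h2 := htrace 2
    linear_combination -h2
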